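/- In the absolute leader system on a connected weighted undirected graph with single leaders S0 = {s0} and S1 = {s1} (s0 ≠ s1), the deviation of the average opinion from 1/2 satisfies |μ({s1}) − 1/2| = |θ(s0)⁻¹ − θ(s1)⁻¹| / (2·R_{s0,s1}). -/

import Mathlib

open Matrix BigOperators Finset

/-- The four Penrose equations characterizing the Moore–Penrose pseudoinverse. -/
def Penrose {m : Type*} [Fintype m] (M Mp : Matrix m m ℝ) : Prop :=
  M * Mp * M = M ∧ Mp * M * Mp = Mp ∧ (M * Mp)ᵀ = M * Mp ∧ (Mp * M)ᵀ = Mp * M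

lemma penrose_unique' {m : Type*} [Fintype m] [DecidableEq m] (M P Q : Matrix m m ℝ)
    (hP : Penrose M P) (hQ : Penrose M Q) : P = Q := by
  obtain ⟨hP1, hP2, hP3, hP4⟩ := hP
  obtain ⟨hQ1, hQ2, hQ3, hQ4⟩ := hQ
  have h2 : Mᵀ = Mᵀ * (Pᵀ * Mᵀ) := by
    conv_lhs => rw [← hP1]
    simp only [Matrix.transpose_mul, Matrix.mul_assoc]
  have hMQ : M * Q = M * P := by
    calc M * Q = Qᵀ * Mᵀ := by rw [← hQ3, Matrix.transpose_mul]
    _ = Qᵀ * (Mᵀ * (Pᵀ * Mᵀ)) := by rw [← h2]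
    _ = (Qᵀ * Mᵀ) * (Pᵀ * Mᵀ) := by simp only [Matrix.mul_assoc]
    _ = (M * Q)ᵀ * (M * P)ᵀ := by rw [Matrix.transpose_mul, Matrix.transpose_mul]
    _ = (M * Q) * (M * P) := by rw [hQ3, hP3]
    _ = (M * Q * M) * P := by simp only [Matrix.mul_assoc]
    _ = M * P := by rw [hQ1]
  have hQM : Q * M = P * M := by
    calc Q * M = Mᵀ * Qᵀ := by rw [← hQ4, Matrix.transpose_mul]
    _ = (Mᵀ * (Pᵀ * Mᵀ)) * Qᵀ := by rw [← h2]
    _ = (Mᵀ * Pᵀ) * (Mᵀ * Qᵀ) := by simp only [Matrix.mul_assoc]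
    _ = (P * M)ᵀ * (Q * M)ᵀ := by rw [Matrix.transpose_mul, Matrix.transpose_mul]
    _ = (P * M) * (Q * M) := by rw [hQ4, hP4]
    _ = P * (M * Q * M) := by simp only [Matrix.mul_assoc]
    _ = P * M := by rw [hQ1]
  calc P = P * M * P := hP2.symm
  _ = P * (M * P) := by rw [Matrix.mul_assoc]
  _ = P * (M * Q) := by rw [← hMQ]
  _ = (P * M) * Q := by rw [Matrix.mul_assoc]
  _ = (Q * M) * Q := by rw [hQM]
  _ = Q := hQ2

lemma penrose_transpose' {m : Type*} [Fintype m] [DecidableEq m] (M P : Matrix m m ℝ)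
    (hM : Mᵀ = M) (hP : Penrose M P) : Penrose M Pᵀ := by
  obtain ⟨hP1, hP2, hP3, hP4⟩ := hP
  refine ⟨?_, ?_, ?_, ?_⟩
  · rw [← Matrix.transpose_inj]
    simp only [Matrix.transpose_mul, Matrix.transpose_transpose, hM, ← Matrix.mul_assoc]
    exact hP1
  · rw [← Matrix.transpose_inj]
    simp only [Matrix.transpose_mul, Matrix.transpose_transpose, hM, ← Matrix.mul_assoc]
    exact hP2
  · rw [Matrix.transpose_mul, Matrix.transpose_transpose, hM]
    conv_rhs => rw [← hM]
    rw [← Matrix.transpose_mul]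
    exact hP4.symm
  · rw [Matrix.transpose_mul, Matrix.transpose_transpose, hM]
    conv_rhs => rw [← hM]
    rw [← Matrix.transpose_mul]
    exact hP3.symm

lemma lap_quad' {n : ℕ} (A : Matrix (Fin n) (Fin n) ℝ) (hAsym : Aᵀ = A) (z : Fin n → ℝ) :
    2 * (z ⬝ᵥ (Matrix.diagonal (fun u => ∑ v, A u v) - A).mulVec z)
      = ∑ u, ∑ v, A u v * (z u - z v) ^ 2 := by
  have hs : ∀ u v, A v u = A u v := fun u v => (congrFun (congrFun hAsym v) u).symm
  have hmv : (Matrix.diagonal (fun u => ∑ v, A u v) - A).mulVec z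
      = fun u => (∑ v, A u v) * z u - ∑ v, A u v * z v := by
    funext u
    simp only [Matrix.mulVec, dotProduct, Matrix.sub_apply, Matrix.diagonal_apply,
      sub_mul, ite_mul, zero_mul, Finset.sum_sub_distrib, Finset.sum_ite_eq, Finset.mem_univ,
      if_pos, Finset.sum_mul]
  have lhs1 : z ⬝ᵥ (Matrix.diagonal (fun u => ∑ v, A u v) - A).mulVec z
      = ∑ u, ∑ v, (A u v * (z u * z u) - A u v * (z u * z v)) := by
    rw [hmv]
    simp only [dotProduct]
    refine Finset.sum_congr rfl fun u _ => ?_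
    rw [mul_sub, Finset.sum_mul, Finset.mul_sum, Finset.mul_sum, ← Finset.sum_sub_distrib]
    exact Finset.sum_congr rfl fun v _ => by ring
  have swap : ∑ u, ∑ v, (A u v * (z v * z v) - A u v * (z u * z v))
      = ∑ u, ∑ v, (A u v * (z u * z u) - A u v * (z u * z v)) := by
    rw [Finset.sum_comm]
    refine Finset.sum_congr rfl fun u _ => Finset.sum_congr rfl fun v _ => ?_
    rw [hs u v]; ring
  calc 2 * (z ⬝ᵥ (Matrix.diagonal (fun u => ∑ v, A u v) - A).mulVec z)
      = ∑ u, ∑ v, (A u v * (z u * z u) - A u v * (z u * z v))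
        + ∑ u, ∑ v, (A u v * (z v * z v) - A u v * (z u * z v)) := by
        rw [lhs1, swap]; ring
  _ = ∑ u, ∑ v, ((A u v * (z u * z u) - A u v * (z u * z v))
        + (A u v * (z v * z v) - A u v * (z u * z v))) := by
        rw [← Finset.sum_add_distrib]
        exact Finset.sum_congr rfl fun u _ => (Finset.sum_add_distrib).symm
  _ = ∑ u, ∑ v, A u v * (z u - z v) ^ 2 :=
        Finset.sum_congr rfl fun u _ => Finset.sum_congr rfl fun v _ => by ring

lemma lap_ker' {n : ℕ} (A : Matrix (Fin n) (Fin n) ℝ) (hA : ∀ u v, 0 ≤ A u v)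
    (hAsym : Aᵀ = A) (z : Fin n → ℝ)
    (hz : (Matrix.diagonal (fun u => ∑ v, A u v) - A).mulVec z = 0) :
    ∀ u v, 0 < A u v → z u = z v := by
  have hq : ∑ u, ∑ v, A u v * (z u - z v) ^ 2 = 0 := by
    rw [← lap_quad' A hAsym z, hz, dotProduct_zero, mul_zero]
  have hnn : ∀ u : Fin n, ∀ v : Fin n, 0 ≤ A u v * (z u - z v) ^ 2 :=
    fun u v => mul_nonneg (hA u v) (sq_nonneg _)
  have h0 : ∀ u ∈ Finset.univ, ∀ v ∈ (Finset.univ : Finset (Fin n)),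
      A u v * (z u - z v) ^ 2 = 0 := by
    intro u _
    have := (Finset.sum_eq_zero_iff_of_nonneg
      (fun u _ => Finset.sum_nonneg fun v _ => hnn u v)).mp hq u (Finset.mem_univ u)
    exact (Finset.sum_eq_zero_iff_of_nonneg (fun v _ => hnn u v)).mp this
  intro u v huv
  have := h0 u (Finset.mem_univ u) v (Finset.mem_univ v)
  have h2 : (z u - z v) ^ 2 = 0 := by
    rcases mul_eq_zero.mp this with h | h
    · exact absurd h (ne_of_gt huv)
    · exact h
  have := pow_eq_zero_iff (n := 2) (by norm_num) |>.mp h2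
  linarith [sub_eq_zero.mp this]


/-- in the absolute leader system on a connected weighted undirected graph
with single leaders `s0 ≠ s1`, the deviation of the average opinion from `1/2` is
`|μ({s1}) − 1/2| = |θ(s0)⁻¹ − θ(s1)⁻¹| / (2 R_{s0,s1})`,
where `R` is the effective resistance and `θ` the information centrality. -/
theorem stmt4
    (n : ℕ) (hn : 2 ≤ n)
    (A : Matrix (Fin n) (Fin n) ℝ)
    (hA : ∀ u v, 0 ≤ A u v) (hAsym : Aᵀ = A)
    (hconn : ∀ u v : Fin n, Relation.ReflTransGen (fun a b => 0 < A a b) u v)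
    (L : Matrix (Fin n) (Fin n) ℝ)
    (hL : L = Matrix.diagonal (fun u => ∑ v, A u v) - A)
    (Lplus : Matrix (Fin n) (Fin n) ℝ) (hLplus : Penrose L Lplus)
    -- effective resistance `R_{u,v} = (L⁺)_{u,u} − 2(L⁺)_{u,v} + (L⁺)_{v,v}`:
    (Reff : Fin n → Fin n → ℝ)
    (hReff : Reff = fun u v => Lplus u u - 2 * Lplus u v + Lplus v v)
    -- information centrality `θ(u) = n / Σ_v R_{u,v}`:
    (θ : Fin n → ℝ) (hθ : θ = fun u => (n : ℝ) / ∑ v, Reff u v)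
    (s0 s1 : Fin n) (hs : s0 ≠ s1)
    -- the steady-state opinion vector of the absolute leader system with
    -- `S0 = {s0}` and `S1 = {s1}`:
    (xhat : Fin n → ℝ)
    (hx0 : xhat s0 = 0) (hx1 : xhat s1 = 1)
    (hxF : ∀ v, v ≠ s0 → v ≠ s1 → L.mulVec xhat v = 0)
    -- the follower-follower submatrix of the Laplacian is invertible:
    (hinv : IsUnit (Matrix.det
      (Matrix.of (fun i j : {v : Fin n // v ≠ s0 ∧ v ≠ s1} => L i.1 j.1))))
    -- the average opinion `μ({s1})`:
    (μ : ℝ) (hμ : μ = (n : ℝ)⁻¹ * ∑ v, xhat v) :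
    |μ - 1 / 2| = |(θ s0)⁻¹ - (θ s1)⁻¹| / (2 * Reff s0 s1) := by
  have hn0 : (n : ℝ) ≠ 0 := Nat.cast_ne_zero.mpr (by omega)
  have hLsym : Lᵀ = L := by
    rw [hL, Matrix.transpose_sub, Matrix.diagonal_transpose, hAsym]
  have hPsym : Lplusᵀ = Lplus :=
    penrose_unique' L Lplusᵀ Lplus (penrose_transpose' L Lplus hLsym hLplus) hLplus
  have hsymE : ∀ u v, Lplus u v = Lplus v u := fun u v => congrFun (congrFun hPsym v) u
  have hLE : ∀ u v, L u v = L v u := fun u v => congrFun (congrFun hLsym v) u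
  set b := L.mulVec xhat with hb
  have hrowsum : ∀ w, ∑ v, L w v = 0 := by
    intro w
    rw [hL]
    simp [Matrix.sub_apply, Matrix.diagonal_apply, Finset.sum_sub_distrib,
      Finset.sum_ite_eq]
  have hsumb : ∑ v, b v = 0 := by
    simp only [hb, Matrix.mulVec, dotProduct]
    rw [Finset.sum_comm]
    refine Finset.sum_eq_zero fun w _ => ?_
    have : ∑ v, L v w = 0 := by
      rw [Finset.sum_congr rfl fun v _ => hLE v w]
      exact hrowsum w
    rw [← Finset.sum_mul, this, zero_mul]
  set c := b s1 with hc
  have hbs0 : b s0 = -c := by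
    have hsub : ∑ v, b v = ∑ v ∈ ({s0, s1} : Finset (Fin n)), b v := by
      refine (Finset.sum_subset (Finset.subset_univ _) ?_).symm
      intro v _ hv
      simp only [Finset.mem_insert, Finset.mem_singleton, not_or] at hv
      exact hxF v hv.1 hv.2
    rw [Finset.sum_pair hs, hsumb] at hsub
    linarith [hsub]
  have hbv : ∀ v, b v = c * ((if v = s1 then (1:ℝ) else 0) - (if v = s0 then 1 else 0)) := by
    intro v
    by_cases h1 : v = s1
    · subst h1
      simp [hs.symm, hc]
    · by_cases h0 : v = s0
      · subst h0
        simp [hs, h1, hbs0]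
      · simp only [h1, h0, if_false, sub_zero, sub_self, mul_zero]
        exact hxF v h0 h1
  set y := Lplus.mulVec b with hy
  have hmvgen : ∀ (M : Matrix (Fin n) (Fin n) ℝ) (v : Fin n),
      (M.mulVec (fun w => c * ((if w = s1 then (1:ℝ) else 0) - (if w = s0 then 1 else 0)))) v
        = c * (M v s1 - M v s0) := by
    intro M v
    simp only [Matrix.mulVec, dotProduct, mul_sub, mul_ite, mul_one, mul_zero,
      Finset.sum_sub_distrib, Finset.sum_ite_eq', Finset.mem_univ, if_pos]
    ring
  have hbfun : b = fun w => c * ((if w = s1 then (1:ℝ) else 0) - (if w = s0 then 1 else 0)) :=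
    funext hbv
  have hyv : ∀ v, y v = c * (Lplus v s1 - Lplus v s0) := by
    intro v
    rw [hy, hbfun]
    exact hmvgen Lplus v
  have hLy : L.mulVec y = b := by
    rw [hy, hb]
    simp only [Matrix.mulVec_mulVec]
    rw [← Matrix.mul_assoc, hLplus.1]
  have hker0 : (Matrix.diagonal (fun u => ∑ v, A u v) - A).mulVec (xhat - y) = 0 := by
    rw [← hL, Matrix.mulVec_sub, hLy, ← hb, sub_self]
  have hker := lap_ker' A hA hAsym (xhat - y) hker0
  have hconst : ∀ v, xhat v - y v = - y s0 := by
    intro v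
    have htrans : ∀ {a b' : Fin n}, Relation.ReflTransGen (fun a b => 0 < A a b) a b' →
        (xhat - y) a = (xhat - y) b' := by
      intro a b' h
      induction h with
      | refl => rfl
      | tail _ h2 ih => exact ih.trans (hker _ _ h2)
    have := htrans (hconn v s0)
    simpa [hx0] using this
  have hxv : ∀ v, xhat v = c * (Lplus v s1 - Lplus v s0 - Lplus s0 s1 + Lplus s0 s0) := by
    intro v
    have h := hconst v
    rw [hyv v, hyv s0] at h
    linarith [h]
  set R : ℝ := Lplus s0 s0 - 2 * Lplus s0 s1 + Lplus s1 s1 with hR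
  have hReffR : Reff s0 s1 = R := by rw [hReff]
  have hcR : c * R = 1 := by
    have h := hxv s1
    rw [hx1, hsymE s1 s0] at h
    rw [hR]
    linear_combination -h
  have hc0 : c ≠ 0 := fun h => by simp [h] at hcR
  -- R ≥ 0 via PSD of Lplus
  have hRnn : 0 ≤ R := by
    have hdot : b ⬝ᵥ Lplus.mulVec b = c * c * R := by
      rw [hbfun]
      simp only [dotProduct]
      rw [Finset.sum_congr rfl fun v _ => by rw [hmvgen Lplus v]]
      have : ∀ v, (c * ((if v = s1 then (1:ℝ) else 0) - (if v = s0 then 1 else 0)))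
          * (c * (Lplus v s1 - Lplus v s0))
          = (c*c) * ((if v = s1 then (1:ℝ) else 0) * (Lplus v s1 - Lplus v s0))
            - (c*c) * ((if v = s0 then (1:ℝ) else 0) * (Lplus v s1 - Lplus v s0)) := by
        intro v; ring
      rw [Finset.sum_congr rfl fun v _ => this v]
      simp only [Finset.sum_sub_distrib, ← Finset.mul_sum, ite_mul, one_mul, zero_mul,
        Finset.sum_ite_eq', Finset.mem_univ, if_pos]
      rw [hR, hsymE s1 s0]
      ring
    have hquad : 0 ≤ b ⬝ᵥ Lplus.mulVec b := by
      have hrw : b ⬝ᵥ Lplus.mulVec b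
          = (Lplus.mulVec b) ⬝ᵥ L.mulVec (Lplus.mulVec b) := by
        conv_lhs => rw [← hLplus.2.1]
        rw [Matrix.mul_assoc, ← Matrix.mulVec_mulVec, ← Matrix.mulVec_mulVec,
          dotProduct_mulVec, ← hPsym, Matrix.vecMul_transpose, hPsym]
      rw [hrw]
      have h2 := lap_quad' A hAsym (Lplus.mulVec b)
      rw [← hL] at h2
      have hnn : 0 ≤ ∑ u, ∑ v, A u v * ((Lplus.mulVec b) u - (Lplus.mulVec b) v) ^ 2 :=
        Finset.sum_nonneg fun u _ => Finset.sum_nonneg fun v _ =>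
          mul_nonneg (hA u v) (sq_nonneg _)
      linarith
    nlinarith [hdot, hquad, sq_nonneg c]
  have hR0 : R ≠ 0 := fun h => by simp [h] at hcR
  have hRpos : 0 < R := lt_of_le_of_ne hRnn (Ne.symm hR0)
  -- sums
  set S0 : ℝ := ∑ v, Lplus v s0 with hS0
  set S1 : ℝ := ∑ v, Lplus v s1 with hS1
  set T : ℝ := ∑ v, Lplus v v with hT
  have hsumR : ∀ s : Fin n, (∑ v, Lplus v s) = (∑ v, Lplus s v) := by
    intro s
    exact Finset.sum_congr rfl fun v _ => hsymE v s
  have hsumR0 : ∑ v, Reff s0 v = n * Lplus s0 s0 - 2 * S0 + T := by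
    rw [hReff, hS0, hsumR s0]
    simp only [Finset.sum_add_distrib, Finset.sum_sub_distrib, Finset.sum_const,
      Finset.card_univ, Fintype.card_fin, nsmul_eq_mul, ← Finset.mul_sum]
    rw [hT]
  have hsumR1 : ∑ v, Reff s1 v = n * Lplus s1 s1 - 2 * S1 + T := by
    rw [hReff, hS1, hsumR s1]
    simp only [Finset.sum_add_distrib, Finset.sum_sub_distrib, Finset.sum_const,
      Finset.card_univ, Fintype.card_fin, nsmul_eq_mul, ← Finset.mul_sum]
    rw [hT]
  have hsumx : ∑ v, xhat v = c * (S1 - S0 - n * Lplus s0 s1 + n * Lplus s0 s0) := by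
    rw [Finset.sum_congr rfl fun v _ => hxv v]
    simp only [mul_sub, mul_add, Finset.sum_add_distrib, Finset.sum_sub_distrib,
      ← Finset.mul_sum, Finset.sum_const, Finset.card_univ, Fintype.card_fin, nsmul_eq_mul]
    rw [hS0, hS1]
  have hθ0 : (θ s0)⁻¹ = (∑ v, Reff s0 v) / n := by rw [hθ]; exact inv_div _ _
  have hθ1 : (θ s1)⁻¹ = (∑ v, Reff s1 v) / n := by rw [hθ]; exact inv_div _ _
  have hn' : (n : ℝ) * (n : ℝ)⁻¹ = 1 := mul_inv_cancel₀ hn0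
  have key2 : (μ - 1/2) * (2 * R) = (θ s0)⁻¹ - (θ s1)⁻¹ := by
    rw [hθ0, hθ1, hsumR0, hsumR1, hμ, hsumx, hR]
    linear_combination (2 * (n:ℝ)⁻¹ * (S1 - S0)
        + 2 * (n:ℝ)⁻¹ * (n:ℝ) * (Lplus s0 s0 - Lplus s0 s1)) * hcR
      + (Lplus s0 s0 - 2 * Lplus s0 s1 + Lplus s1 s1) * hn'
  have key : μ - 1/2 = ((θ s0)⁻¹ - (θ s1)⁻¹) / (2 * R) := by
    rw [eq_div_iff (by positivity : (2:ℝ) * R ≠ 0)]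
    exact key2
  rw [hReffR, key, abs_div, abs_of_pos (by positivity : (0:ℝ) < 2 * R)]
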